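/- Let n, r, k be integers with 1 ≤ r ≤ n−1 and 2 ≤ k ≤ n, and let T be the r-comet on n vertices. Let a be one of the n−r leaves attached to the end vertex of the path. Then d_k(a) = C(n−r, k) + (n−r−1)·C(n−2, k−2) + r·C(n−1, k−1) − C(n−1, k), where C(m, j) denotes the binomial coefficient (taken to be 0 when m < j). -/
import Mathlib


/-- The Steiner distance of a finite set `S` of vertices in `G`: the number of edges of the
smallest connected subgraph of `G` containing `S`. -/
noncomputable def steinerDist {V : Type*} [Fintype V] [DecidableEq V]
    (G : SimpleGraph V) (S : Finset V) : ℕ :=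
  sInf {m : ℕ | ∃ W : Finset V, S ⊆ W ∧ (G.induce (W : Set V)).Connected ∧ W.card = m + 1}

/-- The Steiner `k`-distance of a vertex `v`. -/
noncomputable def steinerKDist {V : Type*} [Fintype V] [DecidableEq V]
    (G : SimpleGraph V) (k : ℕ) (v : V) : ℕ :=
  ∑ S ∈ (Finset.powersetCard (k - 1) (Finset.univ : Finset V)).filter (fun S => v ∉ S),
    steinerDist G (insert v S)

/-- The `r`-comet on `n` vertices: vertices `0, 1, …, r-1` form a path (of length `r-1`),
and each of the vertices `r, r+1, …, n-1` is a pendant leaf attached to the end vertex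
`r-1` of that path. -/
def comet (n r : ℕ) : SimpleGraph (Fin n) :=
  SimpleGraph.fromRel (fun i j =>
    (i.val + 1 = j.val ∧ j.val < r) ∨ (i.val = r - 1 ∧ r ≤ j.val))

open Finset

lemma comet_adj {n r : ℕ} {i j : Fin n} :
    (comet n r).Adj i j ↔ i ≠ j ∧
      ((i.val + 1 = j.val ∧ j.val < r) ∨ (i.val = r - 1 ∧ r ≤ j.val) ∨
       (j.val + 1 = i.val ∧ i.val < r) ∨ (j.val = r - 1 ∧ r ≤ i.val)) := by
  rw [comet, SimpleGraph.fromRel_adj]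
  tauto

lemma cross_walk {n r j : ℕ} {W : Finset (Fin n)}
    {x y : (W : Set (Fin n))}
    (p : ((comet n r).induce (W : Set (Fin n))).Walk x y)
    (hj : j + 1 < r) :
    j < (y : Fin n).val → (x : Fin n).val ≤ j → ∃ z : Fin n, z ∈ W ∧ z.val = j + 1 := by
  induction p with
  | nil => intro hy hx; omega
  | @cons u v w h p ih =>
    intro hy hx
    by_cases hv : (v : Fin n).val ≤ j
    · exact ih hy hv
    · push_neg at hv
      refine ⟨v, v.2, ?_⟩
      simp only [SimpleGraph.comap_adj, Function.Embedding.coe_subtype, comet_adj] at h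
      obtain ⟨hne, hcase⟩ := h
      rcases hcase with ⟨h1, h2⟩ | ⟨h1, h2⟩ | ⟨h1, h2⟩ | ⟨h1, h2⟩ <;> omega

lemma hub_mem_of_walk {n r : ℕ} {W : Finset (Fin n)}
    {x y : (W : Set (Fin n))}
    (p : ((comet n r).induce (W : Set (Fin n))).Walk x y)
    :
    r ≤ (x : Fin n).val → x ≠ y → ∃ z : Fin n, z ∈ W ∧ z.val = r - 1 := by
  induction p with
  | nil => intro hx hxy; exact absurd rfl hxy
  | @cons u v w h p ih =>
    intro hx _
    simp only [SimpleGraph.comap_adj, Function.Embedding.coe_subtype, comet_adj] at h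
    obtain ⟨hne, hcase⟩ := h
    rcases hcase with ⟨h1, h2⟩ | ⟨h1, h2⟩ | ⟨h1, h2⟩ | ⟨h1, h2⟩
    · omega
    · exact ⟨u, u.2, by omega⟩
    · omega
    · exact ⟨v, v.2, h1⟩

lemma card_filter_le_val (n s : ℕ) :
    ((univ : Finset (Fin n)).filter (fun i => s ≤ i.val)).card = n - s := by
  rw [← Finset.card_image_of_injective _ Fin.val_injective]
  have h : (univ.filter (fun i : Fin n => s ≤ i.val)).image Fin.val = Finset.Ico s n := by
    ext t
    simp only [mem_image, mem_filter, mem_univ, true_and, Finset.mem_Ico]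
    constructor
    · rintro ⟨i, hi, rfl⟩; exact ⟨hi, i.isLt⟩
    · rintro ⟨h1, h2⟩; exact ⟨⟨t, h2⟩, h1, rfl⟩
  rw [h, Nat.card_Ico]

lemma card_filter_Ico_val (n s t : ℕ) (ht : t ≤ n) :
    ((univ : Finset (Fin n)).filter (fun i => s ≤ i.val ∧ i.val < t)).card = t - s := by
  rw [← Finset.card_image_of_injective _ Fin.val_injective]
  have h : (univ.filter (fun i : Fin n => s ≤ i.val ∧ i.val < t)).image Fin.val
      = Finset.Ico s t := by
    ext u
    simp only [mem_image, mem_filter, mem_univ, true_and, Finset.mem_Ico]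
    constructor
    · rintro ⟨i, hi, rfl⟩; exact hi
    · rintro ⟨h1, h2⟩; exact ⟨⟨u, by omega⟩, ⟨h1, h2⟩, rfl⟩
  rw [h, Nat.card_Ico]

lemma filter_not_mem_powersetCard {α : Type*} [DecidableEq α] (A : Finset α) (m : ℕ) (x : α) :
    (Finset.powersetCard m A).filter (fun S => x ∉ S) = Finset.powersetCard m (A.erase x) := by
  ext S
  simp only [mem_filter, mem_powersetCard, subset_erase]
  tauto

lemma filter_forall_powersetCard {α : Type*} [DecidableEq α] (A : Finset α) (m : ℕ)
    (p : α → Prop) [DecidablePred p] :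
    (Finset.powersetCard m A).filter (fun S => ∀ i ∈ S, p i) =
      Finset.powersetCard m (A.filter p) := by
  ext S
  simp only [mem_filter, mem_powersetCard]
  constructor
  · rintro ⟨⟨hsub, hcard⟩, hall⟩
    exact ⟨fun i hi => mem_filter.2 ⟨hsub hi, hall i hi⟩, hcard⟩
  · rintro ⟨hsub, hcard⟩
    exact ⟨⟨fun i hi => (mem_filter.1 (hsub hi)).1, hcard⟩,
      fun i hi => (mem_filter.1 (hsub hi)).2⟩

lemma card_filter_mem_powersetCard {α : Type*} [DecidableEq α] (A : Finset α) (m : ℕ)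
    {x : α} (hx : x ∈ A) :
    ((Finset.powersetCard m A).filter (fun S => x ∈ S)).card
      = A.card.choose m - (A.card - 1).choose m := by
  have h := Finset.card_filter_add_card_filter_not (s := Finset.powersetCard m A)
      (p := fun S => x ∈ S)
  have h2 : (Finset.powersetCard m A).filter (fun S => ¬ x ∈ S)
      = Finset.powersetCard m (A.erase x) := filter_not_mem_powersetCard A m x
  rw [h2, Finset.card_powersetCard, Finset.card_powersetCard,
    card_erase_of_mem hx] at h
  have h3 : (A.card - 1).choose m ≤ A.card.choose m :=
    Nat.choose_le_choose m (Nat.sub_le _ _)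
  omega

lemma sum_card_filter_rel {α β : Type*} (𝒮 : Finset α) (J : Finset β)
    (q : α → β → Prop) [∀ a b, Decidable (q a b)] :
    ∑ S ∈ 𝒮, (J.filter (fun j => q S j)).card
      = ∑ j ∈ J, (𝒮.filter (fun S => q S j)).card := by
  simp_rw [Finset.card_filter]
  rw [Finset.sum_comm]

lemma sum_card_inter {α : Type*} [DecidableEq α] (A : Finset α) (m : ℕ)
    (p : α → Prop) [DecidablePred p] :
    ∑ S ∈ Finset.powersetCard m A, (S.filter p).card
      = ∑ x ∈ A.filter p, ((Finset.powersetCard m A).filter (fun S => x ∈ S)).card := by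
  have key : ∀ S ∈ Finset.powersetCard m A,
      (S.filter p).card = ((A.filter p).filter (fun x => x ∈ S)).card := by
    intro S hS
    have hsub : S ⊆ A := (mem_powersetCard.1 hS).1
    congr 1
    ext x
    simp only [mem_filter]
    constructor
    · rintro ⟨h1, h2⟩; exact ⟨⟨hsub h1, h2⟩, h1⟩
    · rintro ⟨⟨_, h2⟩, h3⟩; exact ⟨h3, h2⟩
  rw [Finset.sum_congr rfl key]
  exact sum_card_filter_rel _ _ (fun S x => x ∈ S)

lemma pascal_int {u k : ℕ} (hk : 1 ≤ k) :
    (((u + 1).choose k : ℕ) : ℤ) = (u.choose (k-1) : ℤ) + (u.choose k : ℤ) := by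
  obtain ⟨k', rfl⟩ : ∃ k', k = k' + 1 := ⟨k-1, by omega⟩
  rw [Nat.choose_succ_succ]
  push_cast
  simp

lemma hockey (n k : ℕ) (hk : 1 ≤ k) :
    ∀ s, s + 1 ≤ n → (∑ j ∈ Finset.range s, ((n - 2 - j).choose (k - 1) : ℤ))
      = ((n-1).choose k : ℤ) - ((n - 1 - s).choose k : ℤ) := by
  intro s
  induction s with
  | zero => simp
  | succ s ih =>
    intro h
    rw [Finset.sum_range_succ, ih (by omega),
      show n - 1 - (s+1) = n - 2 - s from by omega,
      show n - 1 - s = (n - 2 - s) + 1 from by omega, pascal_int hk]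
    ring

lemma steinerDist_comet_insert {n r : ℕ} (hr1 : 1 ≤ r) (hrn : r + 1 ≤ n)
    {a : Fin n} (ha : r ≤ a.val) {S : Finset (Fin n)} (haS : a ∉ S) (hS : S.Nonempty) :
    steinerDist (comet n r) (insert a S) =
      1 + (S.filter (fun i => r ≤ i.val)).card
        + ((Finset.range (r - 1)).filter (fun j => ∃ i ∈ S, i.val ≤ j)).card := by
  classical
  obtain ⟨b₀, hb₀S⟩ := hS
  set P : Finset (Fin n) := S.filter (fun i => i.val < r) with hP
  set M : Finset ℕ := insert (r - 1) (P.image Fin.val) with hM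
  have hMne : M.Nonempty := insert_nonempty _ _
  set m := M.min' hMne with hm
  have hm_le : m ≤ r - 1 := min'_le _ _ (mem_insert_self _ _)
  have hm_lb : ∀ i ∈ S, i.val < r → m ≤ i.val := fun i hi hir =>
    min'_le _ _ (mem_insert_of_mem (mem_image_of_mem _ (mem_filter.2 ⟨hi, hir⟩)))
  have hm_mem : m ∈ M := M.min'_mem hMne
  set Seg : Finset (Fin n) := univ.filter (fun i : Fin n => m ≤ i.val ∧ i.val < r) with hSeg
  set W₀ : Finset (Fin n) := insert a S ∪ Seg with hW₀
  have hSegcard : Seg.card = r - m := card_filter_Ico_val n m r (by omega)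
  have hinter : (insert a S) ∩ Seg = P := by
    ext i
    simp only [mem_inter, mem_insert, hSeg, mem_filter, mem_univ, true_and, hP]
    constructor
    · rintro ⟨h1 | h1, h2, h3⟩
      · omega
      · exact ⟨h1, h3⟩
    · rintro ⟨h1, h2⟩
      exact ⟨Or.inr h1, hm_lb i h1 h2, h2⟩
  have hPcard : P.card ≤ S.card := card_filter_le _ _
  have hcardW₀ : W₀.card + P.card = 1 + S.card + (r - m) := by
    have h := Finset.card_union_add_card_inter (insert a S) Seg
    rw [← hW₀, hinter, card_insert_of_notMem haS, hSegcard] at h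
    omega
  have hsplit : P.card + (S.filter (fun i => r ≤ i.val)).card = S.card := by
    have h := Finset.card_filter_add_card_filter_not
      (s := S) (p := fun i : Fin n => i.val < r)
    rw [show (S.filter (fun i : Fin n => ¬ i.val < r))
        = S.filter (fun i : Fin n => r ≤ i.val) from filter_congr (by
          intro i _
          exact not_lt)] at h
    exact h
  have hrange : (Finset.range (r - 1)).filter (fun j => ∃ i ∈ S, i.val ≤ j)
      = Finset.Ico m (r - 1) := by
    ext j
    simp only [mem_filter, Finset.mem_range, Finset.mem_Ico]
    constructor
    · rintro ⟨hj, i, hi, hij⟩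
      refine ⟨le_trans (hm_lb i hi ?_) hij, hj⟩
      omega
    · rintro ⟨h1, h2⟩
      refine ⟨h2, ?_⟩
      rcases mem_insert.1 hm_mem with h | h
      · omega
      · obtain ⟨i, hi, hvi⟩ := mem_image.1 h
        obtain ⟨hiS, -⟩ := mem_filter.1 hi
        exact ⟨i, hiS, by omega⟩
  have hrangecard : ((Finset.range (r - 1)).filter (fun j => ∃ i ∈ S, i.val ≤ j)).card
      = r - 1 - m := by rw [hrange, Nat.card_Ico]
  have hcardD : W₀.card = (1 + (S.filter (fun i => r ≤ i.val)).card
      + ((Finset.range (r - 1)).filter (fun j => ∃ i ∈ S, i.val ≤ j)).card) + 1 := by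
    rw [hrangecard]; omega
  -- the hub vertex
  obtain ⟨hub, hhubval⟩ : ∃ hub : Fin n, hub.val = r - 1 := ⟨⟨r - 1, by omega⟩, rfl⟩
  have hhubW₀ : hub ∈ W₀ := by
    rw [hW₀, mem_union, hSeg, mem_filter]
    exact Or.inr ⟨mem_univ _, by omega, by omega⟩
  have haW₀ : a ∈ W₀ := mem_union_left _ (mem_insert_self _ _)
  have hmem_lb : ∀ i : Fin n, i ∈ W₀ → i.val < r → m ≤ i.val := by
    intro i hi hir
    rcases mem_union.1 hi with h | h
    · rcases mem_insert.1 h with h | h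
      · omega
      · exact hm_lb i h hir
    · exact (mem_filter.1 h).2.1
  have hconn : ((comet n r).induce (W₀ : Set (Fin n))).Connected := by
    rw [SimpleGraph.connected_iff]
    have hhub' : hub ∈ (W₀ : Set (Fin n)) := by exact_mod_cast hhubW₀
    have aux : ∀ t : ℕ, ∀ v : Fin n, ∀ hv : v ∈ (W₀ : Set (Fin n)),
        v.val + t = r - 1 → m ≤ v.val →
        ((comet n r).induce (W₀ : Set (Fin n))).Reachable ⟨hub, hhub'⟩ ⟨v, hv⟩ := by
      intro t
      induction t with
      | zero =>
        intro v hv h1 _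
        have heq : (⟨v, hv⟩ : (W₀ : Set (Fin n))) = ⟨hub, hhub'⟩ :=
          Subtype.ext (Fin.ext (show v.val = hub.val by omega))
        rw [heq]
      | succ t ih =>
        intro v hv h1 h2
        obtain ⟨w, hwval⟩ : ∃ w : Fin n, w.val = v.val + 1 := ⟨⟨v.val + 1, by omega⟩, rfl⟩
        have hwW₀ : w ∈ W₀ := by
          rw [hW₀, mem_union, hSeg, mem_filter]
          exact Or.inr ⟨mem_univ _, by omega, by omega⟩
        have hwW₀' : w ∈ (W₀ : Set (Fin n)) := by exact_mod_cast hwW₀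
        have hadj : ((comet n r).induce (W₀ : Set (Fin n))).Adj ⟨w, hwW₀'⟩ ⟨v, hv⟩ := by
          simp only [SimpleGraph.comap_adj, Function.Embedding.coe_subtype, comet_adj]
          exact ⟨Fin.ne_of_val_ne (by omega),
            Or.inr (Or.inr (Or.inl ⟨by omega, by omega⟩))⟩
        exact (ih w hwW₀' (by omega) (by omega)).trans hadj.reachable
    refine ⟨?_, ⟨⟨hub, hhub'⟩⟩⟩
    have reach : ∀ v : (W₀ : Set (Fin n)),
        ((comet n r).induce (W₀ : Set (Fin n))).Reachable ⟨hub, hhub'⟩ v := by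
      rintro ⟨v, hv⟩
      rcases lt_or_ge v.val r with hvr | hvr
      · have hvW : v ∈ W₀ := by exact_mod_cast hv
        exact aux (r - 1 - v.val) v hv (by have := hmem_lb v hvW hvr; omega)
          (hmem_lb v hvW hvr)
      · have hadj : ((comet n r).induce (W₀ : Set (Fin n))).Adj ⟨hub, hhub'⟩ ⟨v, hv⟩ := by
          simp only [SimpleGraph.comap_adj, Function.Embedding.coe_subtype, comet_adj]
          exact ⟨Fin.ne_of_val_ne (by omega), Or.inr (Or.inl ⟨by omega, hvr⟩)⟩
        exact hadj.reachable
    intro u v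
    exact (reach u).symm.trans (reach v)
  have hDmem : (1 + (S.filter (fun i => r ≤ i.val)).card
      + ((Finset.range (r - 1)).filter (fun j => ∃ i ∈ S, i.val ≤ j)).card)
      ∈ {m' : ℕ | ∃ W : Finset (Fin n), insert a S ⊆ W ∧
      ((comet n r).induce (W : Set (Fin n))).Connected ∧ W.card = m' + 1} :=
    ⟨W₀, by rw [hW₀]; exact subset_union_left, hconn, hcardD⟩
  refine le_antisymm (Nat.sInf_le hDmem) (le_csInf ⟨_, hDmem⟩ ?_)
  rintro b ⟨W, hsub, hWconn, hWcard⟩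
  have haW : a ∈ W := hsub (mem_insert_self _ _)
  have haW' : a ∈ (W : Set (Fin n)) := by exact_mod_cast haW
  have hb₀W : b₀ ∈ W := hsub (mem_insert_of_mem hb₀S)
  have hb₀W' : b₀ ∈ (W : Set (Fin n)) := by exact_mod_cast hb₀W
  have hhubmemW : ∃ z : Fin n, z ∈ W ∧ z.val = r - 1 := by
    obtain ⟨p⟩ := hWconn.preconnected ⟨a, haW'⟩ ⟨b₀, hb₀W'⟩
    exact hub_mem_of_walk p ha
      (fun hc => haS ((show b₀ = a from (congrArg Subtype.val hc).symm) ▸ hb₀S))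
  have hSegW : Seg ⊆ W := by
    intro i hi
    rw [hSeg, mem_filter] at hi
    obtain ⟨-, him, hir⟩ := hi
    rcases Nat.lt_or_ge i.val (r - 1) with hlt | hge
    · obtain ⟨i₀, hi₀S, hvi₀, hi₀r⟩ : ∃ i₀ ∈ S, i₀.val = m ∧ i₀.val < r := by
        rcases mem_insert.1 hm_mem with h | h
        · omega
        · obtain ⟨i₀, hi₀, hvi₀⟩ := mem_image.1 h
          obtain ⟨hi₀S, hi₀r⟩ := mem_filter.1 hi₀
          exact ⟨i₀, hi₀S, hvi₀, hi₀r⟩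
      rcases Nat.eq_or_lt_of_le him with heq | hgt
      · have heq2 : i = i₀ := Fin.ext (by omega)
        rw [heq2]; exact hsub (mem_insert_of_mem hi₀S)
      · have hi₀W' : i₀ ∈ (W : Set (Fin n)) := by
          exact_mod_cast hsub (mem_insert_of_mem hi₀S)
        obtain ⟨p⟩ := hWconn.preconnected ⟨i₀, hi₀W'⟩ ⟨a, haW'⟩
        obtain ⟨z, hzW, hzval⟩ := cross_walk p (j := i.val - 1) (by omega)
          (show i.val - 1 < a.val by omega) (show i₀.val ≤ i.val - 1 by omega)
        have heq2 : z = i := Fin.ext (by omega)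
        rwa [heq2] at hzW
    · obtain ⟨z, hzW, hzval⟩ := hhubmemW
      have heq2 : z = i := Fin.ext (by omega)
      rwa [heq2] at hzW
  have hW₀W : W₀ ⊆ W := by
    rw [hW₀]
    exact union_subset hsub hSegW
  have := card_le_card hW₀W
  omega

theorem stmt11 (n r k : ℕ) (hr1 : 1 ≤ r) (hrn : r ≤ n - 1) (hk2 : 2 ≤ k) (hkn : k ≤ n)
    (a : Fin n) (ha : r ≤ a.val) :
    (steinerKDist (comet n r) k a : ℤ) =
      ((n - r).choose k : ℤ) + ((n - r - 1 : ℕ) : ℤ) * ((n - 2).choose (k - 2) : ℤ)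
        + (r : ℤ) * ((n - 1).choose (k - 1) : ℤ) - ((n - 1).choose k : ℤ) := by
  classical
  have hn2 : r + 1 ≤ n := by have := a.isLt; omega
  rw [steinerKDist]
  rw [show ((Finset.powersetCard (k - 1) (Finset.univ : Finset (Fin n))).filter
      (fun S => a ∉ S)) = Finset.powersetCard (k - 1) ((univ : Finset (Fin n)).erase a) from
    filter_not_mem_powersetCard _ _ _]
  set A : Finset (Fin n) := (univ : Finset (Fin n)).erase a with hA
  have hAcard : A.card = n - 1 := by
    rw [hA, card_erase_of_mem (mem_univ a), card_univ, Fintype.card_fin]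
  have hstep : ∀ S ∈ Finset.powersetCard (k - 1) A,
      steinerDist (comet n r) (insert a S)
        = 1 + (S.filter (fun i => r ≤ i.val)).card
          + ((Finset.range (r - 1)).filter (fun j => ∃ i ∈ S, i.val ≤ j)).card := by
    intro S hS
    obtain ⟨hsub, hcard⟩ := mem_powersetCard.1 hS
    have haS : a ∉ S := fun h => (mem_erase.1 (hsub h)).1 rfl
    have hSne : S.Nonempty := card_pos.1 (by omega)
    exact steinerDist_comet_insert hr1 hn2 ha haS hSne
  rw [Finset.sum_congr rfl hstep]
  -- second sum
  have hc1 : ∑ S ∈ Finset.powersetCard (k - 1) A, (S.filter (fun i => r ≤ i.val)).card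
      = (n - r - 1) * ((n - 1).choose (k - 1) - (n - 2).choose (k - 1)) := by
    rw [_root_.sum_card_inter]
    have hx : ∀ x ∈ A.filter (fun i : Fin n => r ≤ i.val),
        ((Finset.powersetCard (k - 1) A).filter (fun S => x ∈ S)).card
          = (n - 1).choose (k - 1) - (n - 2).choose (k - 1) := by
      intro x hx
      rw [card_filter_mem_powersetCard A (k - 1) (mem_filter.1 hx).1, hAcard,
        show n - 1 - 1 = n - 2 from by omega]
    rw [Finset.sum_congr rfl hx, Finset.sum_const, smul_eq_mul]
    congr 1
    have hamem : a ∈ (univ : Finset (Fin n)).filter (fun i : Fin n => r ≤ i.val) :=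
      mem_filter.2 ⟨mem_univ _, ha⟩
    rw [hA, show (Finset.filter (fun i : Fin n => r ≤ i.val) ((univ : Finset (Fin n)).erase a))
        = ((univ : Finset (Fin n)).filter (fun i : Fin n => r ≤ i.val)).erase a from
        Finset.filter_erase _ a univ,
      card_erase_of_mem hamem, card_filter_le_val]
  -- third sum
  have hc2 : ∑ S ∈ Finset.powersetCard (k - 1) A,
        ((Finset.range (r - 1)).filter (fun j => ∃ i ∈ S, i.val ≤ j)).card
      = ∑ j ∈ Finset.range (r - 1),
          ((n - 1).choose (k - 1) - (n - 2 - j).choose (k - 1)) := by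
    rw [sum_card_filter_rel]
    refine Finset.sum_congr rfl ?_
    intro j hj
    rw [Finset.mem_range] at hj
    have hneg : ((Finset.powersetCard (k - 1) A).filter (fun S => ¬ ∃ i ∈ S, i.val ≤ j))
        = Finset.powersetCard (k - 1) (A.filter (fun i => ¬ i.val ≤ j)) := by
      ext T
      simp only [mem_filter, mem_powersetCard]
      constructor
      · rintro ⟨⟨hsub, hc⟩, hnex⟩
        push_neg at hnex
        exact ⟨fun i hi => mem_filter.2 ⟨hsub hi, not_le.2 (hnex i hi)⟩, hc⟩
      · rintro ⟨hsub, hc⟩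
        refine ⟨⟨fun i hi => (mem_filter.1 (hsub hi)).1, hc⟩, ?_⟩
        rintro ⟨i, hi, hij⟩
        exact (mem_filter.1 (hsub hi)).2 hij
    have htot := Finset.card_filter_add_card_filter_not
        (s := Finset.powersetCard (k - 1) A) (p := fun S => ∃ i ∈ S, i.val ≤ j)
    have hAf : (A.filter (fun i : Fin n => ¬ i.val ≤ j)).card = n - 2 - j := by
      rw [show (A.filter (fun i : Fin n => ¬ i.val ≤ j))
          = A.filter (fun i : Fin n => j + 1 ≤ i.val) from
        filter_congr (by intro i _; constructor <;> (intro h; omega)), hA,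
        show (Finset.filter (fun i : Fin n => j + 1 ≤ i.val) ((univ : Finset (Fin n)).erase a))
          = ((univ : Finset (Fin n)).filter (fun i : Fin n => j + 1 ≤ i.val)).erase a from
          Finset.filter_erase _ a univ,
        card_erase_of_mem (show a ∈ (univ : Finset (Fin n)).filter
          (fun i : Fin n => j + 1 ≤ i.val) from mem_filter.2 ⟨mem_univ _, by omega⟩),
        card_filter_le_val]
      omega
    rw [hneg, Finset.card_powersetCard, hAf, Finset.card_powersetCard, hAcard] at htot
    have hmono : (n - 2 - j).choose (k - 1) ≤ (n - 1).choose (k - 1) :=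
      Nat.choose_le_choose _ (by omega)
    omega
  have hTot : ∑ S ∈ Finset.powersetCard (k - 1) A,
      (1 + (S.filter (fun i => r ≤ i.val)).card
        + ((Finset.range (r - 1)).filter (fun j => ∃ i ∈ S, i.val ≤ j)).card)
      = (n - 1).choose (k - 1)
        + (n - r - 1) * ((n - 1).choose (k - 1) - (n - 2).choose (k - 1))
        + ∑ j ∈ Finset.range (r - 1),
            ((n - 1).choose (k - 1) - (n - 2 - j).choose (k - 1)) := by
    rw [Finset.sum_add_distrib, Finset.sum_add_distrib, Finset.sum_const,
      Finset.card_powersetCard, hAcard, smul_eq_mul, mul_one, hc1, hc2]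
  rw [hTot]
  -- now cast to ℤ
  have hmono2 : (n - 2).choose (k - 1) ≤ (n - 1).choose (k - 1) :=
    Nat.choose_le_choose _ (by omega)
  have hcast : ∀ j ∈ Finset.range (r - 1),
      (((n - 1).choose (k - 1) - (n - 2 - j).choose (k - 1) : ℕ) : ℤ)
        = ((n - 1).choose (k - 1) : ℤ) - ((n - 2 - j).choose (k - 1) : ℤ) := fun j _ =>
    Nat.cast_sub (Nat.choose_le_choose _ (by omega))
  push_cast [Nat.cast_sub hmono2]
  rw [Finset.sum_congr rfl hcast, Finset.sum_sub_distrib, Finset.sum_const,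
    Finset.card_range, hockey n k (by omega) (r - 1) (by omega),
    show n - 1 - (r - 1) = n - r from by omega]
  have hpas : ((n - 1).choose (k - 1) : ℤ) - ((n - 2).choose (k - 1) : ℤ)
      = ((n - 2).choose (k - 2) : ℤ) := by
    have h := pascal_int (u := n - 2) (k := k - 1) (by omega)
    rw [show n - 2 + 1 = n - 1 from by omega, show k - 1 - 1 = k - 2 from by omega] at h
    linarith
  have hr1' : ((r - 1 : ℕ) : ℤ) = (r : ℤ) - 1 := by omega
  rw [nsmul_eq_mul, hr1']
  linear_combination ((n - r - 1 : ℕ) : ℤ) * hpas
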